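/- Let A be an augmented algebra over a field k and B a subalgebra of A. Then every injective A-module restricts to an injective B-module if and only if A is flat as a right B-module. -/

import Mathlib

open scoped TensorProduct

/-- The relation submodule defining the balanced tensor product `A ⊗_B N` as the quotient
of `A ⊗_ℤ N` by the relations `(a·b) ⊗ n = a ⊗ (b·n)` for `b ∈ B`. -/
def balancedRel (k A : Type) [Field k] [Ring A] [Algebra k A] (B : Subalgebra k A)
    (N : Type) [AddCommGroup N] [Module ↥B N] : Submodule ℤ (A ⊗[ℤ] N) :=
  Submodule.span ℤ
    {x : A ⊗[ℤ] N | ∃ (a : A) (n : N) (b : ↥B), x = (a * (b : A)) ⊗ₜ[ℤ] n - a ⊗ₜ[ℤ] (b • n)}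

namespace IRFaux

variable {k A : Type} [Field k] [Ring A] [Algebra k A] {B : Subalgebra k A}
variable {N N' : Type} [AddCommGroup N] [AddCommGroup N'] [Module ↥B N] [Module ↥B N']

lemma rel_mem (a : A) (n : N) (b : ↥B) :
    (a * (b : A)) ⊗ₜ[ℤ] n - a ⊗ₜ[ℤ] (b • n) ∈ balancedRel k A B N :=
  Submodule.subset_span ⟨a, n, b, rfl⟩

lemma mk_rel (a : A) (n : N) (b : ↥B) :
    (Submodule.Quotient.mk ((a * (b : A)) ⊗ₜ[ℤ] n) :
      (A ⊗[ℤ] N) ⧸ balancedRel k A B N) = Submodule.Quotient.mk (a ⊗ₜ[ℤ] (b • n)) :=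
  (Submodule.Quotient.eq _).2 (rel_mem a n b)

lemma hom_ext {P : Type*} [AddCommGroup P] [Module ℤ P]
    {φ ψ : ((A ⊗[ℤ] N) ⧸ balancedRel k A B N) →ₗ[ℤ] P}
    (h : ∀ (a : A) (n : N), φ (Submodule.Quotient.mk (a ⊗ₜ[ℤ] n))
        = ψ (Submodule.Quotient.mk (a ⊗ₜ[ℤ] n))) : φ = ψ :=
  Submodule.linearMap_qext _ (TensorProduct.ext' h)

/-- The induced map `A ⊗_B N → A ⊗_B N'` coming from a `B`-linear map. -/
noncomputable def tmap (f : N →ₗ[↥B] N') :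
    ((A ⊗[ℤ] N) ⧸ balancedRel k A B N) →ₗ[ℤ] ((A ⊗[ℤ] N') ⧸ balancedRel k A B N') :=
  Submodule.liftQ _ ((Submodule.mkQ _).comp
      (TensorProduct.map LinearMap.id f.toAddMonoidHom.toIntLinearMap)) (by
    rw [balancedRel, Submodule.span_le]
    rintro x ⟨a, n, b, rfl⟩
    simp only [SetLike.mem_coe, LinearMap.mem_ker, map_sub, LinearMap.comp_apply,
      TensorProduct.map_tmul, LinearMap.id_apply, AddMonoidHom.coe_toIntLinearMap,
      LinearMap.toAddMonoidHom_coe, Submodule.mkQ_apply, f.map_smul]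
    change (Submodule.Quotient.mk ((a * (b : A)) ⊗ₜ[ℤ] f n) : (A ⊗[ℤ] N') ⧸ balancedRel k A B N')
      - Submodule.Quotient.mk (a ⊗ₜ[ℤ] f (b • n)) = 0
    rw [f.map_smul, mk_rel, sub_self])

@[simp] lemma tmap_mk (f : N →ₗ[↥B] N') (a : A) (n : N) :
    tmap f (Submodule.Quotient.mk (a ⊗ₜ[ℤ] n)) = Submodule.Quotient.mk (a ⊗ₜ[ℤ] f n) := rfl

/-- Left multiplication by `a' : A` on `A ⊗_B N`. -/
noncomputable def aSmul (a' : A) :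
    ((A ⊗[ℤ] N) ⧸ balancedRel k A B N) →ₗ[ℤ] ((A ⊗[ℤ] N) ⧸ balancedRel k A B N) :=
  Submodule.liftQ _ ((Submodule.mkQ _).comp
      (TensorProduct.map (LinearMap.mulLeft ℤ a') LinearMap.id)) (by
    rw [balancedRel, Submodule.span_le]
    rintro x ⟨a, n, b, rfl⟩
    simp only [SetLike.mem_coe, LinearMap.mem_ker, map_sub, LinearMap.comp_apply,
      TensorProduct.map_tmul, LinearMap.id_apply, LinearMap.mulLeft_apply,
      Submodule.mkQ_apply]
    change (Submodule.Quotient.mk ((a' * (a * (b : A))) ⊗ₜ[ℤ] n) : (A ⊗[ℤ] N) ⧸ balancedRel k A B N)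
      - (Submodule.Quotient.mk ((a' * a) ⊗ₜ[ℤ] (b • n)) : (A ⊗[ℤ] N) ⧸ balancedRel k A B N)
      = (0 : (A ⊗[ℤ] N) ⧸ balancedRel k A B N)
    rw [← mul_assoc, mk_rel, sub_self])

@[simp] lemma aSmul_mk (a' a : A) (n : N) :
    aSmul (B := B) a' (Submodule.Quotient.mk (a ⊗ₜ[ℤ] n))
      = Submodule.Quotient.mk ((a' * a) ⊗ₜ[ℤ] n) := rfl

variable (k B) in
/-- The ring morphism from `A` to endomorphisms of `A ⊗_B N`. -/
noncomputable def rho (N : Type) [AddCommGroup N] [Module ↥B N] :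
    A →+* Module.End ℤ ((A ⊗[ℤ] N) ⧸ balancedRel k A B N) where
  toFun := aSmul
  map_one' := hom_ext fun a n => by simp
  map_mul' x y := hom_ext fun a n => by
    simp [Module.End.mul_apply, mul_assoc]
  map_zero' := hom_ext fun a n => by
    simp [TensorProduct.zero_tmul]
  map_add' x y := hom_ext fun a n => by
    simp [add_mul, TensorProduct.add_tmul, Submodule.Quotient.mk_add]

variable (k B) in
/-- The `A`-module structure on `A ⊗_B N`. -/
noncomputable def tmod (N : Type) [AddCommGroup N] [Module ↥B N] :
    Module A ((A ⊗[ℤ] N) ⧸ balancedRel k A B N) :=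
  Module.compHom _ (rho k B N)

lemma tmod_smul_mk (a' a : A) (n : N) :
    letI := tmod k B N
    a' • (Submodule.Quotient.mk (a ⊗ₜ[ℤ] n) : (A ⊗[ℤ] N) ⧸ balancedRel k A B N)
      = Submodule.Quotient.mk ((a' * a) ⊗ₜ[ℤ] n) := rfl

lemma tmod_smul_def (a' : A) (t : (A ⊗[ℤ] N) ⧸ balancedRel k A B N) :
    letI := tmod k B N
    a' • t = aSmul a' t := rfl

/-- The left `A`-module structure on `CharacterModule A` via right translation. -/
noncomputable def imod (A : Type) [Ring A] : Module A (CharacterModule A) where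
  smul a c := c.comp (AddMonoidHom.mulRight a)
  one_smul c := AddMonoidHom.ext fun x => by show c (x * 1) = c x; rw [mul_one]
  mul_smul a b c := AddMonoidHom.ext fun x => by
    show c (x * (a * b)) = c (x * a * b); rw [mul_assoc]
  smul_zero a := AddMonoidHom.ext fun x => rfl
  smul_add a c c' := AddMonoidHom.ext fun x => rfl
  add_smul a b c := AddMonoidHom.ext fun x => by
    show c (x * (a + b)) = c (x * a) + c (x * b); rw [mul_add, map_add]
  zero_smul c := AddMonoidHom.ext fun x => by
    show c (x * 0) = 0; rw [mul_zero, map_zero]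

lemma imod_injective (A : Type) [Ring A] :
    letI := imod A
    Module.Injective A (CharacterModule A) := by
  letI := imod A
  refine ⟨fun X Y _ _ _ _ i hi φ => ?_⟩
  obtain ⟨c', hc'⟩ := (Module.Baer.of_divisible _).extension_property_addMonoidHom
      i.toAddMonoidHom hi
      { toFun := fun x => φ x 1
        map_zero' := by show φ 0 1 = 0; rw [map_zero]; rfl
        map_add' := fun x₁ x₂ => by
          show φ (x₁ + x₂) 1 = φ x₁ 1 + φ x₂ 1; rw [map_add]; rfl }
  refine ⟨{ toFun := fun y => AddMonoidHom.mk' (fun a => c' (a • y))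
              (fun a₁ a₂ => by
                show c' ((a₁ + a₂) • y) = c' (a₁ • y) + c' (a₂ • y)
                rw [add_smul, map_add])
            map_add' := fun y₁ y₂ => AddMonoidHom.ext fun x => by
              show c' (x • (y₁ + y₂)) = c' (x • y₁) + c' (x • y₂)
              rw [smul_add, map_add]
            map_smul' := fun a' y => AddMonoidHom.ext fun x => by
              rw [RingHom.id_apply]
              show c' (x • a' • y) = c' ((x * a') • y)
              rw [smul_smul] }, fun x => ?_⟩
  refine AddMonoidHom.ext fun a => ?_
  show c' (a • i x) = φ x a
  rw [← i.map_smul]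
  have := DFunLike.congr_fun hc' (a • x)
  simp only [AddMonoidHom.comp_apply, LinearMap.toAddMonoidHom_coe] at this
  rw [this]
  show φ (a • x) 1 = φ x a
  rw [φ.map_smul]
  show φ x (1 * a) = φ x a
  rw [one_mul]

end IRFaux

set_option maxHeartbeats 1000000 in
/-- Every injective left `A`-module restricts to an injective `B`-module if and only if
`A` is flat as a right `B`-module, i.e. for every injective map `f : N → N'` of left
`B`-modules the induced map `A ⊗_B N → A ⊗_B N'` is injective. -/
theorem injective_restriction_iff_flat
    (k A : Type) [Field k] [Ring A] [Algebra k A] (ε : A →ₐ[k] k)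
    (B : Subalgebra k A) :
    (∀ (M : Type) [AddCommGroup M] [Module A M], Module.Injective A M →
        letI : Module ↥B M := Module.compHom M (B.val.toRingHom)
        Module.Injective ↥B M)
    ↔
    (∀ (N N' : Type) [AddCommGroup N] [AddCommGroup N'] [Module ↥B N] [Module ↥B N']
        (f : N →ₗ[↥B] N'), Function.Injective f →
        ∀ (g : ((A ⊗[ℤ] N) ⧸ balancedRel k A B N)
            →ₗ[ℤ] ((A ⊗[ℤ] N') ⧸ balancedRel k A B N')),
          (∀ (a : A) (n : N), g (Submodule.Quotient.mk (a ⊗ₜ[ℤ] n))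
              = Submodule.Quotient.mk (a ⊗ₜ[ℤ] f n)) →
          Function.Injective g) := by
  constructor
  · -- injective restriction ⇒ flat
    intro hL N N' _ _ _ _ f hf g hg
    rw [injective_iff_map_eq_zero]
    intro x hx
    by_contra hne
    obtain ⟨χ, hχ⟩ := CharacterModule.exists_character_apply_ne_zero_of_ne_zero hne
    letI iA : Module A (CharacterModule A) := IRFaux.imod A
    haveI hBI : @Module.Injective ↥B _ (CharacterModule A) _
        (Module.compHom _ (B.val.toRingHom)) :=
      hL (CharacterModule A) (IRFaux.imod_injective A)
    letI bI : Module ↥B (CharacterModule A) := Module.compHom _ (B.val.toRingHom)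
    let φ : N →ₗ[↥B] CharacterModule A :=
      { toFun := fun n => AddMonoidHom.mk'
          (fun a => χ (Submodule.Quotient.mk (a ⊗ₜ[ℤ] n)))
          (fun a₁ a₂ => by
            show χ (Submodule.Quotient.mk ((a₁ + a₂) ⊗ₜ[ℤ] n)) = _
            rw [TensorProduct.add_tmul, Submodule.Quotient.mk_add, map_add])
        map_add' := fun n₁ n₂ => AddMonoidHom.ext fun a => by
          show χ (Submodule.Quotient.mk (a ⊗ₜ[ℤ] (n₁ + n₂)))
            = χ (Submodule.Quotient.mk (a ⊗ₜ[ℤ] n₁))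
              + χ (Submodule.Quotient.mk (a ⊗ₜ[ℤ] n₂))
          rw [TensorProduct.tmul_add, Submodule.Quotient.mk_add, map_add]
        map_smul' := fun b n => AddMonoidHom.ext fun a => by
          rw [RingHom.id_apply]
          show χ (Submodule.Quotient.mk (a ⊗ₜ[ℤ] (b • n)))
            = χ (Submodule.Quotient.mk ((a * (b : A)) ⊗ₜ[ℤ] n))
          rw [IRFaux.mk_rel] }
    obtain ⟨ψ, hψ⟩ := hBI.out f hf φ
    have hcond : ∀ (r : ℤ) (a : A) (n' : N'),
        (ψ n') (r • a) = (ψ (r • n')) a := by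
      intro r a n'
      rw [map_zsmul (ψ n') r a, map_zsmul ψ r n']
      rfl
    let F : A →+ N' →+ AddCircle (1 : ℚ) :=
      { toFun := fun a =>
          { toFun := fun n' => ψ n' a
            map_zero' := by show ψ 0 a = 0; rw [map_zero]; rfl
            map_add' := fun n₁ n₂ => by
              show ψ (n₁ + n₂) a = ψ n₁ a + ψ n₂ a; rw [map_add]; rfl }
        map_zero' := AddMonoidHom.ext fun n' => by
          show ψ n' 0 = 0; rw [map_zero]
        map_add' := fun a₁ a₂ => AddMonoidHom.ext fun n' => by
          show ψ n' (a₁ + a₂) = ψ n' a₁ + ψ n' a₂; rw [map_add] }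
    let L : (A ⊗[ℤ] N') →ₗ[ℤ] AddCircle (1 : ℚ) :=
      (TensorProduct.liftAddHom F (fun r a n' => hcond r a n')).toIntLinearMap
    have hker : balancedRel k A B N' ≤ LinearMap.ker L := by
      rw [balancedRel, Submodule.span_le]
      rintro y ⟨a, n', b, rfl⟩
      simp only [SetLike.mem_coe, LinearMap.mem_ker, map_sub,
        AddMonoidHom.coe_toIntLinearMap, TensorProduct.liftAddHom_tmul, L, F]
      show ψ n' (a * (b : A)) - ψ (b • n') a = 0
      rw [ψ.map_smul]
      show ψ n' (a * (b : A)) - ψ n' (a * (b : A)) = 0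
      rw [sub_self]
    let χ' := Submodule.liftQ _ L hker
    have key : χ'.comp g = χ.toIntLinearMap := by
      refine IRFaux.hom_ext fun a n => ?_
      rw [LinearMap.comp_apply, hg]
      show ψ (f n) a = χ (Submodule.Quotient.mk (a ⊗ₜ[ℤ] n))
      rw [hψ n]
      rfl
    have hz : χ x = 0 := by
      have := DFunLike.congr_fun key x
      rw [LinearMap.comp_apply, hx, map_zero] at this
      exact this.symm.trans rfl
    exact hχ hz
  · -- flat ⇒ injective restriction
    intro hR M _ _ hM
    letI bM : Module ↥B M := Module.compHom M (B.val.toRingHom)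
    show Module.Injective ↥B M
    refine ⟨fun X Y _ _ _ _ i hi φ => ?_⟩
    letI tX : Module A ((A ⊗[ℤ] X) ⧸ balancedRel k A B X) := IRFaux.tmod k B X
    letI tY : Module A ((A ⊗[ℤ] Y) ⧸ balancedRel k A B Y) := IRFaux.tmod k B Y
    -- the evaluation map `A ⊗_B X → M`
    have hcond2 : ∀ (r : ℤ) (a : A) (x : X), (r • a) • φ x = a • φ (r • x) := by
      intro r a x
      rw [map_zsmul φ r x, smul_assoc]
      exact (map_zsmul (DistribMulAction.toAddMonoidHom M a) r (φ x)).symm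
    let F2 : A →+ X →+ M :=
      { toFun := fun a =>
          { toFun := fun x => a • φ x
            map_zero' := by show a • φ 0 = 0; rw [map_zero, smul_zero]
            map_add' := fun x₁ x₂ => by
              show a • φ (x₁ + x₂) = a • φ x₁ + a • φ x₂
              rw [map_add, smul_add] }
        map_zero' := AddMonoidHom.ext fun x => by
          show (0 : A) • φ x = 0; rw [zero_smul]
        map_add' := fun a₁ a₂ => AddMonoidHom.ext fun x => by
          show (a₁ + a₂) • φ x = a₁ • φ x + a₂ • φ x; rw [add_smul] }
    let L2 : (A ⊗[ℤ] X) →ₗ[ℤ] M :=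
      (TensorProduct.liftAddHom F2 (fun r a x => hcond2 r a x)).toIntLinearMap
    have hker2 : balancedRel k A B X ≤ LinearMap.ker L2 := by
      rw [balancedRel, Submodule.span_le]
      rintro y ⟨a, x, b, rfl⟩
      simp only [SetLike.mem_coe, LinearMap.mem_ker, map_sub,
        AddMonoidHom.coe_toIntLinearMap, TensorProduct.liftAddHom_tmul, L2, F2]
      show (a * (b : A)) • φ x - a • φ (b • x) = 0
      rw [φ.map_smul]
      show (a * (b : A)) • φ x - a • ((b : A) • φ x) = 0
      rw [mul_smul, sub_self]
    let ev0 : ((A ⊗[ℤ] X) ⧸ balancedRel k A B X) →ₗ[ℤ] M := Submodule.liftQ _ L2 hker2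
    have ev0_mk : ∀ (a : A) (x : X),
        ev0 (Submodule.Quotient.mk (a ⊗ₜ[ℤ] x)) = a • φ x := fun a x => rfl
    have ev_smul : ∀ (a' : A) (t : (A ⊗[ℤ] X) ⧸ balancedRel k A B X),
        ev0 (a' • t) = a' • ev0 t := by
      intro a' t
      have heq : ev0.comp (IRFaux.aSmul a')
          = ((DistribMulAction.toAddMonoidHom M a').toIntLinearMap).comp ev0 := by
        refine IRFaux.hom_ext fun a x => ?_
        rw [LinearMap.comp_apply, LinearMap.comp_apply, IRFaux.aSmul_mk,
          ev0_mk, ev0_mk]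
        show (a' * a) • φ x = a' • (a • φ x)
        rw [mul_smul]
      have := DFunLike.congr_fun heq t
      rw [LinearMap.comp_apply, LinearMap.comp_apply] at this
      rw [IRFaux.tmod_smul_def]
      exact this
    let ev : ((A ⊗[ℤ] X) ⧸ balancedRel k A B X) →ₗ[A] M :=
      { toFun := ev0
        map_add' := ev0.map_add
        map_smul' := fun a' t => by rw [RingHom.id_apply]; exact ev_smul a' t }
    -- the A-linear induced map
    have tmap_smul : ∀ (a' : A) (t : (A ⊗[ℤ] X) ⧸ balancedRel k A B X),
        IRFaux.tmap i (a' • t) = a' • IRFaux.tmap i t := by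
      intro a' t
      have heq : (IRFaux.tmap i).comp (IRFaux.aSmul a')
          = (IRFaux.aSmul a').comp (IRFaux.tmap i) := by
        refine IRFaux.hom_ext fun a x => ?_
        rw [LinearMap.comp_apply, LinearMap.comp_apply, IRFaux.aSmul_mk,
          IRFaux.tmap_mk, IRFaux.tmap_mk, IRFaux.aSmul_mk]
      have := DFunLike.congr_fun heq t
      rw [LinearMap.comp_apply, LinearMap.comp_apply] at this
      rw [IRFaux.tmod_smul_def, IRFaux.tmod_smul_def]
      exact this
    let Ti : ((A ⊗[ℤ] X) ⧸ balancedRel k A B X) →ₗ[A]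
        ((A ⊗[ℤ] Y) ⧸ balancedRel k A B Y) :=
      { toFun := IRFaux.tmap i
        map_add' := (IRFaux.tmap i).map_add
        map_smul' := fun a' t => by rw [RingHom.id_apply]; exact tmap_smul a' t }
    have hTi : Function.Injective Ti :=
      hR X Y i hi (IRFaux.tmap i) (fun a x => IRFaux.tmap_mk i a x)
    obtain ⟨h, hh⟩ := hM.out Ti hTi ev
    refine ⟨{ toFun := fun y => h (Submodule.Quotient.mk ((1 : A) ⊗ₜ[ℤ] y))
              map_add' := fun y₁ y₂ => by
                show h (Submodule.Quotient.mk ((1 : A) ⊗ₜ[ℤ] (y₁ + y₂)))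
                  = h (Submodule.Quotient.mk ((1 : A) ⊗ₜ[ℤ] y₁))
                    + h (Submodule.Quotient.mk ((1 : A) ⊗ₜ[ℤ] y₂))
                rw [TensorProduct.tmul_add, Submodule.Quotient.mk_add, map_add]
              map_smul' := fun b y => by
                rw [RingHom.id_apply]
                calc h (Submodule.Quotient.mk ((1 : A) ⊗ₜ[ℤ] (b • y)))
                    = h (Submodule.Quotient.mk (((1 : A) * (b : A)) ⊗ₜ[ℤ] y)) := by
                      rw [IRFaux.mk_rel]
                  _ = h (Submodule.Quotient.mk (((b : A) * (1 : A)) ⊗ₜ[ℤ] y)) := by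
                      rw [one_mul, mul_one]
                  _ = h ((b : A) • Submodule.Quotient.mk ((1 : A) ⊗ₜ[ℤ] y)) := by
                      rw [IRFaux.tmod_smul_mk]
                  _ = (b : A) • h (Submodule.Quotient.mk ((1 : A) ⊗ₜ[ℤ] y)) :=
                      h.map_smul _ _
                  _ = b • h (Submodule.Quotient.mk ((1 : A) ⊗ₜ[ℤ] y)) := rfl },
      fun x => ?_⟩
    show h (Submodule.Quotient.mk ((1 : A) ⊗ₜ[ℤ] i x)) = φ x
    have hTix : Ti (Submodule.Quotient.mk ((1 : A) ⊗ₜ[ℤ] x))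
        = Submodule.Quotient.mk ((1 : A) ⊗ₜ[ℤ] i x) := IRFaux.tmap_mk i 1 x
    rw [← hTix, hh]
    show (1 : A) • φ x = φ x
    rw [one_smul]
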